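/- (Gauge potential for curl-free two-particle potentials.) Let K be a positive integer and let f_{1,μ}, f_{2,μ} : ℝ⁸ → ℂ^{K×K} (μ = 0,1,2,3) be twice continuously differentiable functions satisfying ∂f_{2,ν}/∂x_1^μ = ∂f_{1,μ}/∂x_2^ν for all μ, ν = 0,…,3 on ℝ⁸. Then there exist a continuously differentiable function M : ℝ⁸ → ℂ^{K×K} and functions f̃_{1,μ}, f̃_{2,μ} : ℝ⁴ → ℂ^{K×K} such that for all (x_1,x_2) ∈ ℝ⁸ and all μ: f_{1,μ}(x_1,x_2) = (∂M/∂x_1^μ)(x_1,x_2) + f̃_{1,μ}(x_1) and f_{2,μ}(x_1,x_2) = (∂M/∂x_2^μ)(x_1,x_2) + f̃_{2,μ}(x_2). In particular, such potentials are gauge-equivalent to potentials depending only on the respective particle's own coordinate. -/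

import Mathlib

set_option synthInstance.maxHeartbeats 1000000
set_option maxHeartbeats 2000000


/-!
STATEMENT 9: If `∂f_{2,ν}/∂x_1^μ = ∂f_{1,μ}/∂x_2^ν` for C² matrix-valued
functions on ℝ⁸, then there are a C¹ gauge function `M : ℝ⁸ → ℂ^{K×K}` and
single-particle potentials `f̃_{j,μ}` such that
`f_{j,μ}(x_1,x_2) = ∂M/∂x_j^μ (x_1,x_2) + f̃_{j,μ}(x_j)`.
-/

open Matrix

noncomputable section

attribute [local instance] Matrix.normedAddCommGroup Matrix.normedSpace

/-- Two-particle configuration space-time `ℝ⁸ = ℝ⁴ × ℝ⁴`. -/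
abbrev Pt := (Fin 4 → ℝ) × (Fin 4 → ℝ)

/-- The coordinate direction `x_k^μ` in `ℝ⁸`. -/
def dir (k : Fin 2) (μ : Fin 4) : Pt :=
  if k = 0 then (Pi.single μ 1, 0) else (0, Pi.single μ 1)

/-- Partial derivative `∂f/∂x_k^μ` on `ℝ⁸`. -/
def pdk {F : Type*} [NormedAddCommGroup F] [NormedSpace ℝ F]
    (k : Fin 2) (μ : Fin 4) (f : Pt → F) (X : Pt) : F :=
  fderiv ℝ f X (dir k μ)

instance instTopMatNormed {K : ℕ} : TopologicalSpace (Matrix (Fin K) (Fin K) ℂ) :=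
  @UniformSpace.toTopologicalSpace _ (@PseudoMetricSpace.toUniformSpace _
    (@SeminormedAddCommGroup.toPseudoMetricSpace _
      (@NormedAddCommGroup.toSeminormedAddCommGroup _ Matrix.normedAddCommGroup)))

open MeasureTheory intervalIntegral ContinuousLinearMap

section ParamInt

variable {H : Type*} [NormedAddCommGroup H] [NormedSpace ℝ H] [FiniteDimensional ℝ H]
  {E : Type*} [NormedAddCommGroup E] [NormedSpace ℝ E] [CompleteSpace E]

set_option linter.unusedSectionVars false

/-- Continuity in `t` of the partial `x`-derivative, plus differentiation under the
interval integral, for a jointly `C¹` integrand. -/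
theorem param_hasFDerivAt (F : H → ℝ → E)
    (hF : ContDiff ℝ 1 (fun p : H × ℝ => F p.1 p.2)) (x₀ : H) :
    Continuous (fun t : ℝ => fderiv ℝ (fun x => F x t) x₀) ∧
    HasFDerivAt (fun x => ∫ t in (0:ℝ)..1, F x t)
      (∫ t in (0:ℝ)..1, fderiv ℝ (fun x => F x t) x₀) x₀ := by
  set G : H × ℝ → E := fun p => F p.1 p.2 with hG
  have hGc : Continuous G := hF.continuous
  have hG' : Continuous (fderiv ℝ G) := (contDiff_one_iff_fderiv.mp hF).2
  set F' : H → ℝ → H →L[ℝ] E := fun x t => (fderiv ℝ G (x, t)).comp (inl ℝ H ℝ) with hF'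
  have hdiff : ∀ (x : H) (t : ℝ), HasFDerivAt (fun x => F x t) (F' x t) x := by
    intro x t
    exact ((hF.differentiable one_ne_zero (x, t)).hasFDerivAt).comp (f := fun e : H => (e, t)) x
      (hasFDerivAt_prodMk_left x t)
  have hfe : ∀ (x : H) (t : ℝ), fderiv ℝ (fun x => F x t) x = F' x t :=
    fun x t => (hdiff x t).fderiv
  have hF'c : Continuous (fun p : H × ℝ => F' p.1 p.2) := by
    exact (hG'.clm_comp continuous_const)
  constructor
  · simp only [hfe]
    exact hF'c.comp (Continuous.prodMk_right x₀)
  obtain ⟨C, hC⟩ := ((isCompact_closedBall x₀ 1).prod (isCompact_uIcc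
      (a := (0:ℝ)) (b := 1))).exists_bound_of_continuousOn hF'c.continuousOn
  simp only [hfe]
  apply intervalIntegral.hasFDerivAt_integral_of_dominated_of_fderiv_le
    (F' := F') (bound := fun _ => C) (s := Metric.ball x₀ 1) (Metric.ball_mem_nhds x₀ one_pos)
  · exact Filter.Eventually.of_forall fun x =>
      ((hGc.comp (Continuous.prodMk_right x)).aestronglyMeasurable)
  · exact (hGc.comp (Continuous.prodMk_right x₀)).intervalIntegrable 0 1
  · exact ((hF'c.comp (Continuous.prodMk_right x₀))).aestronglyMeasurable
  · refine Filter.Eventually.of_forall fun t ht x hx => ?_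
    exact hC (x, t) ⟨Metric.ball_subset_closedBall hx, Set.uIoc_subset_uIcc ht⟩
  · exact intervalIntegrable_const
  · exact Filter.Eventually.of_forall fun t _ x _ => hdiff x t

theorem param_contDiff_one (F : H → ℝ → E)
    (hF : ContDiff ℝ 1 (fun p : H × ℝ => F p.1 p.2)) :
    ContDiff ℝ 1 (fun x => ∫ t in (0:ℝ)..1, F x t) := by
  rw [contDiff_one_iff_fderiv]
  have hd : ∀ x, HasFDerivAt (fun x => ∫ t in (0:ℝ)..1, F x t)
      (∫ t in (0:ℝ)..1, fderiv ℝ (fun x' => F x' t) x) x :=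
    fun x => (param_hasFDerivAt F hF x).2
  refine ⟨fun x => (hd x).differentiableAt, ?_⟩
  have : (fderiv ℝ fun x => ∫ t in (0:ℝ)..1, F x t)
      = fun x => ∫ t in (0:ℝ)..1, fderiv ℝ (fun x' => F x' t) x := by
    funext x; exact (hd x).fderiv
  rw [this]
  have hG' : Continuous (fderiv ℝ (fun p : H × ℝ => F p.1 p.2)) :=
    (contDiff_one_iff_fderiv.mp hF).2
  have hF'c : Continuous (fun p : H × ℝ =>
      (fderiv ℝ (fun p : H × ℝ => F p.1 p.2) (p.1, p.2)).comp (inl ℝ H ℝ)) := by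
    exact ((hG'.comp (by fun_prop)).clm_comp continuous_const)
  have := continuous_parametric_intervalIntegral_of_continuous'
    (μ := volume) (f := fun (x : H) (t : ℝ) =>
      (fderiv ℝ (fun p : H × ℝ => F p.1 p.2) (x, t)).comp (inl ℝ H ℝ)) hF'c 0 1
  refine this.congr fun x => (intervalIntegral.integral_congr fun t _ => ?_).symm
  exact (((hF.differentiable one_ne_zero (x, t)).hasFDerivAt).comp (f := fun e : H => (e, t)) x
      (hasFDerivAt_prodMk_left x t)).fderiv

theorem param_contDiff_two (F : H → ℝ → E)
    (hF : ContDiff ℝ 2 (fun p : H × ℝ => F p.1 p.2)) :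
    ContDiff ℝ 2 (fun x => ∫ t in (0:ℝ)..1, F x t) := by
  have h2 : (2 : WithTop ℕ∞) = 1 + 1 := by norm_num
  have hd : ∀ x, HasFDerivAt (fun x => ∫ t in (0:ℝ)..1, F x t)
      (∫ t in (0:ℝ)..1, fderiv ℝ (fun x' => F x' t) x) x :=
    fun x => (param_hasFDerivAt F (hF.of_le one_le_two) x).2
  rw [h2, contDiff_succ_iff_fderiv]
  refine ⟨fun x => (hd x).differentiableAt, by simp, ?_⟩
  have heq : (fderiv ℝ fun x => ∫ t in (0:ℝ)..1, F x t)
      = fun x => ∫ t in (0:ℝ)..1, (fun x' t' => fderiv ℝ (fun y => F y t') x') x t := by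
    funext x; exact (hd x).fderiv
  rw [heq]
  apply param_contDiff_one
  have hG' : ContDiff ℝ 1 (fderiv ℝ (fun p : H × ℝ => F p.1 p.2)) :=
    hF.fderiv_right (by norm_num)
  have key : ∀ (x : H) (t : ℝ), fderiv ℝ (fun y => F y t) x
      = (fderiv ℝ (fun p : H × ℝ => F p.1 p.2) (x, t)).comp (inl ℝ H ℝ) :=
    fun x t => ((((hF.of_le one_le_two).differentiable one_ne_zero (x, t)).hasFDerivAt).comp (f := fun e : H => (e, t)) x
      (hasFDerivAt_prodMk_left x t)).fderiv
  simp only [key]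
  exact (hG'.comp (contDiff_fst.prodMk contDiff_snd)).clm_comp contDiff_const

end ParamInt

section Helpers

lemma dir_zero (μ : Fin 4) : dir 0 μ = ((Pi.single μ 1 : Fin 4 → ℝ), (0 : Fin 4 → ℝ)) := rfl

lemma dir_one (μ : Fin 4) : dir 1 μ = ((0 : Fin 4 → ℝ), (Pi.single μ 1 : Fin 4 → ℝ)) := rfl

lemma single_decomp (w : Fin 4 → ℝ) : w = ∑ σ : Fin 4, w σ • (Pi.single σ 1 : Fin 4 → ℝ) := by
  funext j
  simp [Finset.sum_apply, Pi.single_apply]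

lemma decomp_right (w : Fin 4 → ℝ) : (((0 : Fin 4 → ℝ), w) : Pt) = ∑ σ : Fin 4, w σ • dir 1 σ := by
  simp only [dir_one, Prod.smul_mk, smul_zero]
  rw [Prod.ext_iff]
  constructor
  · simp [Prod.fst_sum]
  · simpa [Prod.snd_sum] using single_decomp w

lemma decomp_left (w : Fin 4 → ℝ) : ((w, (0 : Fin 4 → ℝ)) : Pt) = ∑ σ : Fin 4, w σ • dir 0 σ := by
  simp only [dir_zero, Prod.smul_mk, smul_zero]
  rw [Prod.ext_iff]
  constructor
  · simpa [Prod.fst_sum] using single_decomp w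
  · simp [Prod.snd_sum]

variable {E : Type*} [NormedAddCommGroup E] [NormedSpace ℝ E]

lemma clm_right (L : Pt →L[ℝ] E) (w : Fin 4 → ℝ) :
    L ((0 : Fin 4 → ℝ), w) = ∑ σ : Fin 4, w σ • L (dir 1 σ) := by
  rw [decomp_right w, map_sum]
  simp

lemma clm_left (L : Pt →L[ℝ] E) (w : Fin 4 → ℝ) :
    L (w, (0 : Fin 4 → ℝ)) = ∑ σ : Fin 4, w σ • L (dir 0 σ) := by
  rw [decomp_left w, map_sum]
  simp

end Helpers

theorem gauge_potential_exists
    (K : ℕ) (hK : 0 < K)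
    (f₁ f₂ : Fin 4 → Pt → Matrix (Fin K) (Fin K) ℂ)
    (hf₁ : ∀ μ, ContDiff ℝ 2 (f₁ μ)) (hf₂ : ∀ μ, ContDiff ℝ 2 (f₂ μ))
    (hsym : ∀ μ ν : Fin 4, ∀ X : Pt, pdk 0 μ (f₂ ν) X = pdk 1 ν (f₁ μ) X) :
    ∃ (M : Pt → Matrix (Fin K) (Fin K) ℂ)
      (g₁ g₂ : Fin 4 → (Fin 4 → ℝ) → Matrix (Fin K) (Fin K) ℂ),
      ContDiff ℝ 1 M ∧
      (∀ μ : Fin 4, ∀ X : Pt, f₁ μ X = pdk 0 μ M X + g₁ μ X.1) ∧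
      (∀ μ : Fin 4, ∀ X : Pt, f₂ μ X = pdk 1 μ M X + g₂ μ X.2) := by
  classical
  simp only [pdk] at hsym ⊢
  haveI : CompleteSpace (Matrix (Fin K) (Fin K) ℂ) := FiniteDimensional.complete ℂ _
  set F : Pt → ℝ → Matrix (Fin K) (Fin K) ℂ :=
    fun X t => ∑ ν : Fin 4, X.1 ν • f₁ ν (t • X.1, X.2) with hFdef
  have hFC2 : ContDiff ℝ 2 (fun p : Pt × ℝ => F p.1 p.2) := by
    apply ContDiff.sum
    intro ν _
    have hproj : ContDiff ℝ 2 (fun p : Pt × ℝ => p.1.1 ν) :=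
      ((ContinuousLinearMap.proj ν : (Fin 4 → ℝ) →L[ℝ] ℝ).contDiff).comp contDiff_fst.fst
    have hmap : ContDiff ℝ 2 (fun p : Pt × ℝ => ((p.2 • p.1.1, p.1.2) : Pt)) :=
      (contDiff_snd.smul contDiff_fst.fst).prodMk contDiff_fst.snd
    exact hproj.smul ((hf₁ ν).comp hmap)
  set M : Pt → Matrix (Fin K) (Fin K) ℂ := fun X => ∫ t in (0:ℝ)..1, F X t with hMdef
  have hM2 : ContDiff ℝ 2 M := param_contDiff_two F hFC2
  have hMd : ∀ X : Pt, HasFDerivAt M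
      (∫ t in (0:ℝ)..1, fderiv ℝ (fun x => F x t) X) X :=
    fun X => (param_hasFDerivAt F (hFC2.of_le one_le_two) X).2
  have hMc : ∀ X : Pt, Continuous (fun t : ℝ => fderiv ℝ (fun x => F x t) X) :=
    fun X => (param_hasFDerivAt F (hFC2.of_le one_le_two) X).1
  -- pointwise value of the partial derivative of the integrand in an `x₂`-direction
  have hval : ∀ (X : Pt) (t : ℝ) (w : Fin 4 → ℝ),
      fderiv ℝ (fun x => F x t) X ((0 : Fin 4 → ℝ), w)
        = ∑ σ : Fin 4, w σ • (fderiv ℝ (f₂ σ) (t • X.1, X.2) (X.1, (0 : Fin 4 → ℝ))) := by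
    have hD : ∀ (X : Pt) (t : ℝ), HasFDerivAt (fun x => F x t)
        (∑ ν : Fin 4, (X.1 ν • ((fderiv ℝ (f₁ ν) (t • X.1, X.2)).comp
            ((t • ContinuousLinearMap.fst ℝ (Fin 4 → ℝ) (Fin 4 → ℝ)).prod
              (ContinuousLinearMap.snd ℝ (Fin 4 → ℝ) (Fin 4 → ℝ))))
          + ((ContinuousLinearMap.proj ν).comp
              (ContinuousLinearMap.fst ℝ (Fin 4 → ℝ) (Fin 4 → ℝ))).smulRight
              (f₁ ν (t • X.1, X.2)))) X := by
      intro X t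
      apply HasFDerivAt.fun_sum
      intro ν _
      have hc : HasFDerivAt (fun x : Pt => x.1 ν)
          ((ContinuousLinearMap.proj ν).comp
            (ContinuousLinearMap.fst ℝ (Fin 4 → ℝ) (Fin 4 → ℝ))) X :=
        ((ContinuousLinearMap.proj ν).comp
          (ContinuousLinearMap.fst ℝ (Fin 4 → ℝ) (Fin 4 → ℝ))).hasFDerivAt
      have hLt : HasFDerivAt (fun x : Pt => ((t • x.1, x.2) : Pt))
          ((t • ContinuousLinearMap.fst ℝ (Fin 4 → ℝ) (Fin 4 → ℝ)).prod
            (ContinuousLinearMap.snd ℝ (Fin 4 → ℝ) (Fin 4 → ℝ))) X :=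
        ((t • ContinuousLinearMap.fst ℝ (Fin 4 → ℝ) (Fin 4 → ℝ)).prod
          (ContinuousLinearMap.snd ℝ (Fin 4 → ℝ) (Fin 4 → ℝ))).hasFDerivAt
      have hfν : HasFDerivAt (fun x : Pt => f₁ ν (t • x.1, x.2))
          ((fderiv ℝ (f₁ ν) (t • X.1, X.2)).comp
            ((t • ContinuousLinearMap.fst ℝ (Fin 4 → ℝ) (Fin 4 → ℝ)).prod
              (ContinuousLinearMap.snd ℝ (Fin 4 → ℝ) (Fin 4 → ℝ)))) X :=
        (((hf₁ ν).differentiable two_ne_zero _).hasFDerivAt).comp X hLt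
      exact hc.smul hfν
    intro X t w
    rw [(hD X t).fderiv]
    have e1 : ∀ ν : Fin 4, fderiv ℝ (f₁ ν) (t • X.1, X.2) ((0 : Fin 4 → ℝ), w)
        = ∑ σ : Fin 4, w σ • fderiv ℝ (f₂ σ) (t • X.1, X.2) (dir 0 ν) := by
      intro ν
      rw [clm_right]
      exact Finset.sum_congr rfl fun σ _ => by rw [← hsym ν σ]
    simp only [ContinuousLinearMap.sum_apply, ContinuousLinearMap.add_apply,
      ContinuousLinearMap.coe_smul', Pi.smul_apply, ContinuousLinearMap.comp_apply,
      ContinuousLinearMap.smulRight_apply, ContinuousLinearMap.prod_apply,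
      ContinuousLinearMap.coe_fst', ContinuousLinearMap.coe_snd',
      ContinuousLinearMap.proj_apply, smul_zero, Pi.zero_apply, zero_smul, add_zero]
    simp only [e1]
    have e2 : ∀ σ : Fin 4, fderiv ℝ (f₂ σ) (t • X.1, X.2) (X.1, (0 : Fin 4 → ℝ))
        = ∑ ν : Fin 4, X.1 ν • fderiv ℝ (f₂ σ) (t • X.1, X.2) (dir 0 ν) :=
      fun σ => clm_left _ _
    simp only [e2, Finset.smul_sum]
    rw [Finset.sum_comm]
    exact Finset.sum_congr rfl fun σ _ => Finset.sum_congr rfl fun ν _ => smul_comm _ _ _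
  -- the `x₂`-derivatives of M
  have hFTC : ∀ (X : Pt) (w : Fin 4 → ℝ),
      fderiv ℝ M X ((0 : Fin 4 → ℝ), w)
        = ∑ σ : Fin 4, w σ • (f₂ σ X - f₂ σ ((0 : Fin 4 → ℝ), X.2)) := by
    intro X w
    have hint : IntervalIntegrable (fun t => fderiv ℝ (fun x => F x t) X) volume 0 1 :=
      (hMc X).intervalIntegrable 0 1
    rw [(hMd X).fderiv, ContinuousLinearMap.intervalIntegral_apply hint ((0 : Fin 4 → ℝ), w)]
    rw [intervalIntegral.integral_congr (g := fun t => ∑ σ : Fin 4,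
      w σ • (fderiv ℝ (f₂ σ) (t • X.1, X.2) (X.1, (0 : Fin 4 → ℝ)))) (fun t _ => hval X t w)]
    have hc₂ : ∀ σ, Continuous (fderiv ℝ (f₂ σ)) :=
      fun σ => ((hf₂ σ).fderiv_right (m := 1) (by norm_num)).continuous
    have hder : ∀ t : ℝ, HasDerivAt (fun s : ℝ => ∑ σ : Fin 4, w σ • f₂ σ (s • X.1, X.2))
        (∑ σ : Fin 4, w σ • (fderiv ℝ (f₂ σ) (t • X.1, X.2) (X.1, (0 : Fin 4 → ℝ)))) t := by
      intro t
      apply HasDerivAt.fun_sum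
      intro σ _
      have hpath : HasDerivAt (fun s : ℝ => ((s • X.1, X.2) : Pt))
          ((X.1, (0 : Fin 4 → ℝ))) t := by
        have h1 : HasDerivAt (fun s : ℝ => s • X.1) X.1 t := by
          simpa using (hasDerivAt_id t).smul_const X.1
        exact h1.prodMk (hasDerivAt_const t X.2)
      exact (((hf₂ σ).differentiable two_ne_zero _).hasFDerivAt.comp_hasDerivAt
        t hpath).const_smul (w σ)
    have hint2 : IntervalIntegrable (fun t : ℝ => ∑ σ : Fin 4,
        w σ • (fderiv ℝ (f₂ σ) (t • X.1, X.2) (X.1, (0 : Fin 4 → ℝ)))) volume 0 1 := by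
      apply Continuous.intervalIntegrable
      apply continuous_finset_sum
      intro σ _
      exact (((hc₂ σ).comp (by fun_prop)).clm_apply continuous_const).const_smul (w σ)
    rw [intervalIntegral.integral_eq_sub_of_hasDerivAt (fun t _ => hder t) hint2]
    simp [smul_sub, Finset.sum_sub_distrib]
  refine ⟨M, (fun μ y => f₁ μ (y, (0 : Fin 4 → ℝ))
      - fderiv ℝ M (y, (0 : Fin 4 → ℝ)) (dir 0 μ)),
    (fun μ y => f₂ μ ((0 : Fin 4 → ℝ), y)), hM2.of_le one_le_two, ?_, ?_⟩
  · -- the x₁ equations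
    intro μ X
    have hM'C1 : ContDiff ℝ 1 (fderiv ℝ M) := hM2.fderiv_right (m := 1) (by norm_num)
    have hMd' : ∀ Z : Pt, HasFDerivAt M (fderiv ℝ M Z) Z :=
      fun Z => (hM2.differentiable two_ne_zero Z).hasFDerivAt
    have hM'd : ∀ Z : Pt, HasFDerivAt (fderiv ℝ M) (fderiv ℝ (fderiv ℝ M) Z) Z :=
      fun Z => (hM'C1.differentiable one_ne_zero Z).hasFDerivAt
    have hschwarz : ∀ (Z v w' : Pt),
        fderiv ℝ (fderiv ℝ M) Z v w' = fderiv ℝ (fderiv ℝ M) Z w' v :=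
      fun Z => second_derivative_symmetric hMd' (hM'd Z)
    have hmix : ∀ (Z : Pt) (w : Fin 4 → ℝ),
        fderiv ℝ (fderiv ℝ M) Z (dir 0 μ) ((0 : Fin 4 → ℝ), w)
          = fderiv ℝ (f₁ μ) Z ((0 : Fin 4 → ℝ), w) := by
      intro Z w
      set L0 : Pt →L[ℝ] Pt :=
        (ContinuousLinearMap.inr ℝ (Fin 4 → ℝ) (Fin 4 → ℝ)).comp
          (ContinuousLinearMap.snd ℝ (Fin 4 → ℝ) (Fin 4 → ℝ)) with hL0
      have hA : HasFDerivAt (fun z : Pt => fderiv ℝ M z ((0 : Fin 4 → ℝ), w))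
          ((ContinuousLinearMap.apply ℝ (Matrix (Fin K) (Fin K) ℂ)
              (((0 : Fin 4 → ℝ), w) : Pt)).comp (fderiv ℝ (fderiv ℝ M) Z)) Z :=
        ((ContinuousLinearMap.apply ℝ (Matrix (Fin K) (Fin K) ℂ)
          (((0 : Fin 4 → ℝ), w) : Pt)).hasFDerivAt).comp Z (hM'd Z)
      have hB : HasFDerivAt
          (fun z : Pt => ∑ σ : Fin 4, w σ • (f₂ σ z - f₂ σ ((0 : Fin 4 → ℝ), z.2)))
          (∑ σ : Fin 4, w σ • (fderiv ℝ (f₂ σ) Z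
            - (fderiv ℝ (f₂ σ) ((0 : Fin 4 → ℝ), Z.2)).comp L0)) Z := by
        apply HasFDerivAt.fun_sum
        intro σ _
        have hz2 : HasFDerivAt (fun z : Pt => (((0 : Fin 4 → ℝ), z.2) : Pt)) L0 Z :=
          L0.hasFDerivAt
        exact ((((hf₂ σ).differentiable two_ne_zero Z).hasFDerivAt).sub
          ((((hf₂ σ).differentiable two_ne_zero _).hasFDerivAt).comp Z hz2)).const_smul (w σ)
      have heq : (fun z : Pt => fderiv ℝ M z ((0 : Fin 4 → ℝ), w))
          = fun z : Pt => ∑ σ : Fin 4, w σ • (f₂ σ z - f₂ σ ((0 : Fin 4 → ℝ), z.2)) :=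
        funext fun z => hFTC z w
      rw [heq] at hA
      have hAB := hA.unique hB
      have happ := congrArg (fun L : Pt →L[ℝ] Matrix (Fin K) (Fin K) ℂ => L (dir 0 μ)) hAB
      simp only [ContinuousLinearMap.comp_apply, ContinuousLinearMap.apply_apply,
        ContinuousLinearMap.sum_apply, ContinuousLinearMap.coe_smul', Pi.smul_apply,
        ContinuousLinearMap.sub_apply] at happ
      rw [happ]
      have hL0dir : L0 (dir 0 μ) = (0 : Pt) := by
        simp [hL0, dir_zero]
      rw [clm_right (fderiv ℝ (f₁ μ) Z) w]
      simp only [hL0dir, map_zero, sub_zero]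
      exact Finset.sum_congr rfl fun σ _ => by rw [hsym μ σ Z]
    have hφ : ∀ y : Fin 4 → ℝ, HasFDerivAt
        (fun y' : Fin 4 → ℝ => f₁ μ (X.1, y') - fderiv ℝ M (X.1, y') (dir 0 μ))
        (0 : (Fin 4 → ℝ) →L[ℝ] Matrix (Fin K) (Fin K) ℂ) y := by
      intro y
      have hinr : HasFDerivAt (fun y' : Fin 4 → ℝ => ((X.1, y') : Pt))
          (ContinuousLinearMap.inr ℝ (Fin 4 → ℝ) (Fin 4 → ℝ)) y :=
        hasFDerivAt_prodMk_right X.1 y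
      have h1 : HasFDerivAt (fun y' : Fin 4 → ℝ => f₁ μ (X.1, y'))
          ((fderiv ℝ (f₁ μ) (X.1, y)).comp
            (ContinuousLinearMap.inr ℝ (Fin 4 → ℝ) (Fin 4 → ℝ))) y :=
        (((hf₁ μ).differentiable two_ne_zero _).hasFDerivAt).comp y hinr
      have h2 : HasFDerivAt (fun y' : Fin 4 → ℝ => fderiv ℝ M (X.1, y') (dir 0 μ))
          (((ContinuousLinearMap.apply ℝ (Matrix (Fin K) (Fin K) ℂ) (dir 0 μ)).comp
            (fderiv ℝ (fderiv ℝ M) (X.1, y))).comp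
              (ContinuousLinearMap.inr ℝ (Fin 4 → ℝ) (Fin 4 → ℝ))) y :=
        ((((ContinuousLinearMap.apply ℝ (Matrix (Fin K) (Fin K) ℂ)
          (dir 0 μ)).hasFDerivAt).comp ((X.1, y) : Pt)
          (hM'd (X.1, y))).comp y hinr)
      have h12 := h1.sub h2
      refine h12.congr_fderiv ?_
      apply ContinuousLinearMap.ext
      intro w
      simp only [ContinuousLinearMap.zero_apply, ContinuousLinearMap.sub_apply,
        ContinuousLinearMap.comp_apply, ContinuousLinearMap.inr_apply,
        ContinuousLinearMap.apply_apply]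
      rw [hschwarz (X.1, y) ((0 : Fin 4 → ℝ), w) (dir 0 μ), hmix (X.1, y) w, sub_self]
    have hconst := is_const_of_fderiv_eq_zero (𝕜 := ℝ)
      (f := fun y' : Fin 4 → ℝ => f₁ μ (X.1, y') - fderiv ℝ M (X.1, y') (dir 0 μ))
      (fun y => (hφ y).differentiableAt) (fun y => (hφ y).fderiv) X.2 0
    rw [← sub_eq_iff_eq_add']
    simpa using hconst
  · -- the x₂ equations
    intro μ X
    have h := hFTC X (Pi.single μ 1)
    rw [dir_one, h]
    rw [Finset.sum_eq_single μ (by intro b _ hb; simp [Pi.single_apply, hb.symm])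
      (by simp)]
    simp
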